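/- If P is a nonzero prime 𝔇*-stable ideal of R, then χ ∈ P. -/

import Mathlib

noncomputable section

open MvPolynomial

/-- `R = ℂ[X, Y, Z]`, with `X = X 0`, `Y = X 1`, `Z = X 2`. -/
abbrev R3 : Type := MvPolynomial (Fin 3) ℂ

/-- The derivation `d*`. -/
def dstar : Derivation ℂ R3 R3 :=
  MvPolynomial.mkDerivation ℂ
    ![C (4/5) * X 1 * ((X 0) ^ 3 - C 1050 * X 2),
      C (1/10) * X 0 * (C 7 * (X 2) ^ 2 - C 15 * X 0 * (X 1) ^ 2),
      -(C (2/5)) * X 1 * ((X 0) ^ 2 * X 2 + C 875 * (X 1) ^ 2)]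

/-- The derivation `e*`. -/
def estar : Derivation ℂ R3 R3 :=
  MvPolynomial.mkDerivation ℂ
    ![-(C 1152) * (X 2) ^ 2 + C 240 * X 0 * (X 1) ^ 2 + C (4/5) * (X 0) ^ 3 * X 2,
      X 1 * (-(C (6/5)) * (X 0) ^ 2 * X 2 + C 200 * (X 1) ^ 2),
      -(C 240) * (X 1) ^ 2 * X 2 - C (8/5) * (X 0) ^ 2 * (X 2) ^ 2 + C (4/5) * (X 0) ^ 3 * (X 1) ^ 2]

/-- The derivation `f*`. -/
def fstar : Derivation ℂ R3 R3 :=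
  MvPolynomial.mkDerivation ℂ
    ![X 1 * (C 550 * (X 1) ^ 2 - C (4/5) * (X 0) ^ 2 * X 2),
      X 2 * (C (7/2) * X 0 * (X 1) ^ 2 - C (33/10) * (X 2) ^ 2),
      X 1 * (C (11/4) * (X 0) ^ 2 * (X 1) ^ 2 - C (59/20) * X 0 * (X 2) ^ 2)]

/-- The polynomial `χ`. -/
def chi : R3 :=
  C (484/49) * (C 50000 * (X 1) ^ 6 - C 1000 * (X 0) ^ 2 * X 2 * (X 1) ^ 4
    + (X 0) ^ 5 * (X 1) ^ 4 - C 2 * (X 0) ^ 4 * (X 2) ^ 2 * (X 1) ^ 2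
    + C 1800 * X 0 * (X 2) ^ 3 * (X 1) ^ 2 + (X 0) ^ 3 * (X 2) ^ 4 - C 864 * (X 2) ^ 5)

/-- An ideal of `R` is `𝔇*`-stable if it is stable under `d*`, `e*` and `f*`. -/
def DStarStable (I : Ideal R3) : Prop :=
  (∀ p ∈ I, dstar p ∈ I) ∧ (∀ p ∈ I, estar p ∈ I) ∧ (∀ p ∈ I, fstar p ∈ I)

/-! ### Auxiliary lemmas on partial derivatives -/

lemma coeff_pderiv' (i : Fin 3) (m : Fin 3 →₀ ℕ) (p : R3) :
    coeff m (pderiv i p) = (m i + 1 : ℕ) * coeff (m + Finsupp.single i 1) p := by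
  induction p using MvPolynomial.induction_on' with
  | add p q hp hq => simp [hp, hq, mul_add]
  | monomial u a =>
    rw [pderiv_monomial, coeff_monomial, coeff_monomial]
    by_cases hu : u = m + Finsupp.single i 1
    · subst hu
      rw [if_pos (add_tsub_cancel_right _ _), if_pos rfl]
      simp [mul_comm]
    · rw [if_neg hu, mul_zero]
      by_cases h0 : u i = 0
      · simp [h0]
      · rw [if_neg fun he => hu (by
          rw [← he, tsub_add_cancel_of_le (Finsupp.single_le_iff.mpr
            (Nat.one_le_iff_ne_zero.mpr h0))])]

lemma exists_pderiv_ne_zero' {p : R3} (h : p.totalDegree ≠ 0) :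
    ∃ i, pderiv i p ≠ 0 := by
  obtain ⟨m, hm, x, hx⟩ : ∃ m ∈ p.support, ∃ x, m x ≠ 0 := by
    by_contra hcon
    push_neg at hcon
    exact h ((totalDegree_eq_zero_iff (Fin 3) p).mpr hcon)
  refine ⟨x, fun h0 => ?_⟩
  have hc := coeff_pderiv' x (m - Finsupp.single x 1) p
  rw [h0, coeff_zero, tsub_add_cancel_of_le (Finsupp.single_le_iff.mpr
    (Nat.one_le_iff_ne_zero.mpr hx))] at hc
  exact mem_support_iff.mp hm ((mul_eq_zero.mp hc.symm).resolve_left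
    (Nat.cast_ne_zero.mpr (Nat.succ_ne_zero _)))

lemma totalDegree_pderiv_lt' {p : R3} (h : p.totalDegree ≠ 0) (i : Fin 3) :
    (pderiv i p).totalDegree < p.totalDegree := by
  have hpos : 0 < p.totalDegree := Nat.pos_of_ne_zero h
  rcases eq_or_ne (pderiv i p) 0 with h0 | h0
  · simpa [h0] using hpos
  rw [totalDegree, Finset.sup_lt_iff (by simpa using hpos)]
  intro m hm
  have hc : coeff (m + Finsupp.single i 1) p ≠ 0 := by
    have hmm := mem_support_iff.mp hm
    rw [coeff_pderiv'] at hmm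
    exact fun hz => hmm (by simp [hz])
  have hle := le_totalDegree (p := p) (mem_support_iff.mpr hc)
  have hsum : ((m + Finsupp.single i 1).sum fun _ e => e)
      = (m.sum fun _ e => e) + 1 := by
    rw [Finsupp.sum_add_index' (fun _ => rfl) (fun _ _ _ => rfl),
      Finsupp.sum_single_index rfl]
  omega

/-! ### The derivations written out in terms of partial derivatives -/

lemma deriv_apply (v : Fin 3 → R3) (p : R3) :
    mkDerivation ℂ v p = v 0 * pderiv 0 p + v 1 * pderiv 1 p + v 2 * pderiv 2 p := by
  have h : (mkDerivation ℂ v : Derivation ℂ R3 R3)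
      = v 0 • pderiv 0 + v 1 • pderiv 1 + v 2 • pderiv 2 := by
    apply MvPolynomial.derivation_ext
    intro i
    fin_cases i <;> simp [mkDerivation_X, Pi.single_apply]
  rw [h]
  simp [smul_eq_mul]

lemma dstar_apply (p : R3) :
    dstar p = (C (4/5) * X 1 * ((X 0) ^ 3 - C 1050 * X 2)) * pderiv 0 p
      + (C (1/10) * X 0 * (C 7 * (X 2) ^ 2 - C 15 * X 0 * (X 1) ^ 2)) * pderiv 1 p
      + (-(C (2/5)) * X 1 * ((X 0) ^ 2 * X 2 + C 875 * (X 1) ^ 2)) * pderiv 2 p := by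
  rw [dstar, deriv_apply]
  norm_num
  exact neg_mul _ _

lemma estar_apply (p : R3) :
    estar p = (-(C 1152) * (X 2) ^ 2 + C 240 * X 0 * (X 1) ^ 2 + C (4/5) * (X 0) ^ 3 * X 2) * pderiv 0 p
      + (X 1 * (-(C (6/5)) * (X 0) ^ 2 * X 2 + C 200 * (X 1) ^ 2)) * pderiv 1 p
      + (-(C 240) * (X 1) ^ 2 * X 2 - C (8/5) * (X 0) ^ 2 * (X 2) ^ 2 + C (4/5) * (X 0) ^ 3 * (X 1) ^ 2) * pderiv 2 p := by
  rw [estar, deriv_apply]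
  norm_num
  exact Or.inl rfl

lemma fstar_apply (p : R3) :
    fstar p = (X 1 * (C 550 * (X 1) ^ 2 - C (4/5) * (X 0) ^ 2 * X 2)) * pderiv 0 p
      + (X 2 * (C (7/2) * X 0 * (X 1) ^ 2 - C (33/10) * (X 2) ^ 2)) * pderiv 1 p
      + (X 1 * (C (11/4) * (X 0) ^ 2 * (X 1) ^ 2 - C (59/20) * X 0 * (X 2) ^ 2)) * pderiv 2 p := by
  rw [fstar, deriv_apply]
  norm_num
  exact Or.inl rfl

/-! ### Auxiliary polynomials -/

def hh : R3 := (X 1) ^ 2 - C (31/38500 : ℂ) * (X 0) ^ 2 * X 2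

def g1 : R3 := C (757/275 : ℂ) * X 2 - C (13361/4235000 : ℂ) * (X 0) ^ 3

def qePoly : R3 := C (-4372/1925 : ℂ) * X 0 ^ 2 * X 2 + C (400 : ℂ) * X 1 ^ 2
  + C (-31/48125 : ℂ) * X 0 ^ 5

def sPoly : R3 := C (17856/26495 : ℂ) * X 0 * X 2 ^ 2
  + C (4172321/38609176375 : ℂ) * X 0 ^ 4 * X 2
  + C (-1162457313/18003922253779000 : ℂ) * X 0 ^ 7

def W00 : R3 := C (-61/10 : ℂ) * X 0 ^ 4 * X 1 ^ 4 * X 2 + C (589/50 : ℂ) * X 0 ^ 3 * X 1 ^ 2 * X 2 ^ 3 + C (550 : ℂ) * X 0 ^ 2 * X 1 ^ 6 + C (-132/25 : ℂ) * X 0 ^ 2 * X 2 ^ 5 + C (250 : ℂ) * X 0 * X 1 ^ 4 * X 2 ^ 2 + C (-792 : ℂ) * X 1 ^ 2 * X 2 ^ 4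
def W01 : R3 := C (33/8 : ℂ) * X 0 ^ 4 * X 1 ^ 5 + C (-31/4 : ℂ) * X 0 ^ 3 * X 1 ^ 3 * X 2 ^ 2 + C (677/200 : ℂ) * X 0 ^ 2 * X 1 * X 2 ^ 4 + C (-1225 : ℂ) * X 0 * X 1 ^ 5 * X 2 + C (1155 : ℂ) * X 1 ^ 3 * X 2 ^ 3
def W02 : R3 := C (-6/5 : ℂ) * X 0 ^ 5 * X 1 ^ 4 + C (62/25 : ℂ) * X 0 ^ 4 * X 1 ^ 2 * X 2 ^ 2 + C (-28/25 : ℂ) * X 0 ^ 3 * X 2 ^ 4 + C (20 : ℂ) * X 0 ^ 2 * X 1 ^ 4 * X 2 + C (-168 : ℂ) * X 0 * X 1 ^ 2 * X 2 ^ 3 + C (70000 : ℂ) * X 1 ^ 6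
def W10 : R3 := C (-71/25 : ℂ) * X 0 ^ 5 * X 1 ^ 3 * X 2 + C (91/25 : ℂ) * X 0 ^ 4 * X 1 * X 2 ^ 3 + C (-220 : ℂ) * X 0 ^ 3 * X 1 ^ 5 + C (3188 : ℂ) * X 0 ^ 2 * X 1 ^ 3 * X 2 ^ 2 + C (-16992/5 : ℂ) * X 0 * X 1 * X 2 ^ 4 + C (-132000 : ℂ) * X 1 ^ 5 * X 2
def W11 : R3 := C (11/5 : ℂ) * X 0 ^ 5 * X 1 ^ 4 + C (-67/25 : ℂ) * X 0 ^ 4 * X 1 ^ 2 * X 2 ^ 2 + C (-2370 : ℂ) * X 0 ^ 2 * X 1 ^ 4 * X 2 + C (2478 : ℂ) * X 0 * X 1 ^ 2 * X 2 ^ 3 + C (192500 : ℂ) * X 1 ^ 6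
def W12 : R3 := C (-16/25 : ℂ) * X 0 ^ 6 * X 1 ^ 3 + C (24/25 : ℂ) * X 0 ^ 5 * X 1 * X 2 ^ 2 + C (488 : ℂ) * X 0 ^ 3 * X 1 ^ 3 * X 2 + C (-4416/5 : ℂ) * X 0 ^ 2 * X 1 * X 2 ^ 3 + C (-84000 : ℂ) * X 0 * X 1 ^ 5 + C (201600 : ℂ) * X 1 ^ 3 * X 2 ^ 2
def W20 : R3 := C (46/25 : ℂ) * X 0 ^ 4 * X 1 ^ 2 * X 2 ^ 2 + C (-66/25 : ℂ) * X 0 ^ 3 * X 2 ^ 4 + C (1660 : ℂ) * X 0 ^ 2 * X 1 ^ 4 * X 2 + C (-4824 : ℂ) * X 0 * X 1 ^ 2 * X 2 ^ 3 + C (-110000 : ℂ) * X 1 ^ 6 + C (19008/5 : ℂ) * X 2 ^ 5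
def W21 : R3 := C (-8/5 : ℂ) * X 0 ^ 4 * X 1 ^ 3 * X 2 + C (52/25 : ℂ) * X 0 ^ 3 * X 1 * X 2 ^ 3 + C (-825 : ℂ) * X 0 ^ 2 * X 1 ^ 5 + C (3325 : ℂ) * X 0 * X 1 ^ 3 * X 2 ^ 2 + C (-2772 : ℂ) * X 1 * X 2 ^ 4
def W22 : R3 := C (6/25 : ℂ) * X 0 ^ 5 * X 1 ^ 2 * X 2 + C (-14/25 : ℂ) * X 0 ^ 4 * X 2 ^ 3 + C (520 : ℂ) * X 0 ^ 3 * X 1 ^ 4 + C (-888 : ℂ) * X 0 ^ 2 * X 1 ^ 2 * X 2 ^ 2 + C (4032/5 : ℂ) * X 0 * X 2 ^ 4 + C (-168000 : ℂ) * X 1 ^ 4 * X 2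

lemma hhp0 : pderiv (0 : Fin 3) hh = C (-31/19250 : ℂ) * (X 0 * X 2) := by
  unfold hh
  simp [pderiv_mul, pderiv_pow, pderiv_C_mul]
  apply MvPolynomial.funext
  intro x
  simp
  ring

lemma hhp1 : pderiv (1 : Fin 3) hh = C (2 : ℂ) * X 1 := by
  unfold hh
  simp [pderiv_mul, pderiv_pow, pderiv_C_mul]
  apply MvPolynomial.funext
  intro x
  simp
  try ring

lemma hhp2 : pderiv (2 : Fin 3) hh = C (-31/38500 : ℂ) * (X 0) ^ 2 := by
  unfold hh
  simp [pderiv_mul, pderiv_pow, pderiv_C_mul]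
  apply MvPolynomial.funext
  intro x
  simp
  ring

/-! ### The three Cramer identities -/

set_option maxHeartbeats 1000000 in
lemma key0 (p : R3) :
    (C (1715/22 : ℂ) * (chi * (X 1 * hh))) * pderiv 0 p
      = W00 * dstar p + W01 * estar p + W02 * fstar p := by
  rw [dstar_apply, estar_apply, fstar_apply]
  unfold chi hh W00 W01 W02
  apply MvPolynomial.funext
  intro x
  simp
  ring

set_option maxHeartbeats 1000000 in
lemma key1 (p : R3) :
    (C (1715/22 : ℂ) * (chi * (X 1 * hh))) * pderiv 1 p
      = W10 * dstar p + W11 * estar p + W12 * fstar p := by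
  rw [dstar_apply, estar_apply, fstar_apply]
  unfold chi hh W10 W11 W12
  apply MvPolynomial.funext
  intro x
  simp
  ring

set_option maxHeartbeats 1000000 in
lemma key2 (p : R3) :
    (C (1715/22 : ℂ) * (chi * (X 1 * hh))) * pderiv 2 p
      = W20 * dstar p + W21 * estar p + W22 * fstar p := by
  rw [dstar_apply, estar_apply, fstar_apply]
  unfold chi hh W20 W21 W22
  apply MvPolynomial.funext
  intro x
  simp
  ring

/-! ### Case lemmas -/

lemma y_case (P : Ideal R3) (hP : P.IsPrime) (hst : DStarStable P)
    (hY : (X 1 : R3) ∈ P) : chi ∈ P := by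
  have hfY := hst.2.2 _ hY
  have hz3 : (C (-33/10 : ℂ)) * (X 2) ^ 3 ∈ P := by
    have key : (C (-33/10 : ℂ)) * (X 2) ^ 3
        = fstar (X 1) - (C (7/2 : ℂ) * X 0 * X 1 * X 2) * X 1 := by
      rw [fstar_apply]
      simp
      apply MvPolynomial.funext
      intro x
      simp
      try ring
    rw [key]
    exact sub_mem hfY (Ideal.mul_mem_left _ _ hY)
  have hz : (X 2 : R3) ∈ P := by
    refine hP.mem_of_pow_mem 3 ?_
    have hrw : (X 2 : R3) ^ 3 = C (-10/33 : ℂ) * (C (-33/10 : ℂ) * (X 2) ^ 3) := by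
      rw [← mul_assoc, ← C_mul]
      norm_num
    rw [hrw]
    exact Ideal.mul_mem_left _ _ hz3
  have key : chi = (C (484/49 : ℂ) * (C 50000 * (X 1) ^ 5
        - C 1000 * (X 0) ^ 2 * X 2 * (X 1) ^ 3 + (X 0) ^ 5 * (X 1) ^ 3)) * X 1
      + (C (484/49 : ℂ) * (C (-2 : ℂ) * (X 0) ^ 4 * (X 2) * (X 1) ^ 2
        + C 1800 * X 0 * (X 2) ^ 2 * (X 1) ^ 2 + (X 0) ^ 3 * (X 2) ^ 3
        - C 864 * (X 2) ^ 4)) * X 2 := by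
    unfold chi
    apply MvPolynomial.funext
    intro x
    simp
    ring
  rw [key]
  exact add_mem (Ideal.mul_mem_left _ _ hY) (Ideal.mul_mem_left _ _ hz)

lemma h_case (P : Ideal R3) (hP : P.IsPrime) (hst : DStarStable P)
    (hH : hh ∈ P) : chi ∈ P := by
  have hx0y : (X 0 : R3) ∈ P → (X 1 : R3) ∈ P := fun h0 => by
    have hmm : (X 1 : R3) * X 1 ∈ P := by
      have he : (X 1 : R3) * X 1 = hh + (C (31/38500 : ℂ) * X 0 * X 2) * X 0 := by
        unfold hh; ring
      rw [he]
      exact add_mem hH (Ideal.mul_mem_left _ _ h0)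
    exact (hP.mem_or_mem hmm).elim id id
  have hx2y : (X 2 : R3) ∈ P → (X 1 : R3) ∈ P := fun h2 => by
    have hmm : (X 1 : R3) * X 1 ∈ P := by
      have he : (X 1 : R3) * X 1 = hh + (C (31/38500 : ℂ) * (X 0) ^ 2) * X 2 := by
        unfold hh; ring
      rw [he]
      exact add_mem hH (Ideal.mul_mem_left _ _ h2)
    exact (hP.mem_or_mem hmm).elim id id
  have hd := hst.1 hh hH
  have hkey : (X 0 * X 1 * X 2 : R3) * g1
      = dstar hh - (C (-299/110 : ℂ) * (X 0) ^ 2 * X 1) * hh := by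
    rw [dstar_apply hh, hhp0, hhp1, hhp2]
    unfold g1 hh
    apply MvPolynomial.funext
    intro x
    simp
    ring
  have hmem : (X 0 * X 1 * X 2 : R3) * g1 ∈ P := by
    rw [hkey]
    exact sub_mem hd (Ideal.mul_mem_left _ _ hH)
  rcases hP.mem_or_mem hmem with hxyz | hg1
  · rcases hP.mem_or_mem hxyz with hxy | hz
    · rcases hP.mem_or_mem hxy with hx | hy
      · exact y_case P hP hst (hx0y hx)
      · exact y_case P hP hst hy
    · exact y_case P hP hst (hx2y hz)
  · have he := hst.2.1 hh hH
    have hkey2 : C (-15531592158993/76246610744754065000000 : ℂ) * (X 0) ^ 10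
        = estar hh - qePoly * hh - sPoly * g1 := by
      rw [estar_apply hh, hhp0, hhp1, hhp2]
      unfold qePoly sPoly g1 hh
      apply MvPolynomial.funext
      intro x
      simp
      ring
    have hmem2 : C (-15531592158993/76246610744754065000000 : ℂ) * (X 0) ^ 10 ∈ P := by
      rw [hkey2]
      exact sub_mem (sub_mem he (Ideal.mul_mem_left _ _ hH)) (Ideal.mul_mem_left _ _ hg1)
    have hx10 : (X 0 : R3) ^ 10 ∈ P := by
      have hrw : (X 0 : R3) ^ 10
          = C ((-15531592158993/76246610744754065000000 : ℂ)⁻¹)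
            * (C (-15531592158993/76246610744754065000000 : ℂ) * (X 0) ^ 10) := by
        rw [← mul_assoc, ← C_mul]
        norm_num
      rw [hrw]
      exact Ideal.mul_mem_left _ _ hmem2
    exact y_case P hP hst (hx0y (hP.mem_of_pow_mem 10 hx10))

/-- Every nonzero prime `𝔇*`-stable ideal of `R = ℂ[X, Y, Z]` contains `χ`. -/
theorem chi_mem_of_prime_stable (P : Ideal R3) (hP : P.IsPrime) (hP0 : P ≠ ⊥)
    (hst : DStarStable P) : chi ∈ P := by
  obtain ⟨q0, hq0P, hq0⟩ := Submodule.exists_mem_ne_zero_of_ne_bot hP0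
  have hSne : {n | ∃ q ∈ P, q ≠ 0 ∧ MvPolynomial.totalDegree q = n}.Nonempty :=
    ⟨_, q0, hq0P, hq0, rfl⟩
  obtain ⟨p, hpP, hp0, hpd⟩ := Nat.sInf_mem hSne
  have hmin : ∀ q ∈ P, q ≠ 0 →
      sInf {n | ∃ q ∈ P, q ≠ 0 ∧ MvPolynomial.totalDegree q = n} ≤ q.totalDegree :=
    fun q h1 h2 => Nat.sInf_le ⟨q, h1, h2, rfl⟩
  have hd0 : p.totalDegree ≠ 0 := by
    intro h
    have hCeq : p = C (coeff 0 p) := by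
      apply MvPolynomial.ext
      intro m
      rw [coeff_C]
      by_cases hm : m = 0
      · simp [hm]
      · rw [if_neg (fun he => hm he.symm)]
        by_contra hc
        exact hm (Finsupp.ext ((totalDegree_eq_zero_iff (Fin 3) p).mp h m
          (mem_support_iff.mpr hc)))
    have hcne : coeff 0 p ≠ 0 := fun hz => hp0 (by rw [hCeq, hz, map_zero])
    have hu : IsUnit p := by
      rw [hCeq]
      exact (isUnit_iff_ne_zero.mpr hcne).map (C : ℂ →+* R3)
    exact hP.ne_top (P.eq_top_of_isUnit_mem hpP hu)
  obtain ⟨i, hi⟩ := exists_pderiv_ne_zero' hd0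
  have hnotP : pderiv i p ∉ P := by
    intro hmem
    have h1 := hmin _ hmem hi
    have h2 := totalDegree_pderiv_lt' hd0 i
    omega
  have hdp := hst.1 p hpP
  have hep := hst.2.1 p hpP
  have hfp := hst.2.2 p hpP
  have hW : C (1715/22 : ℂ) * (chi * (X 1 * hh)) ∈ P := by
    refine (hP.mem_or_mem (?_ : _ * pderiv i p ∈ P)).resolve_right hnotP
    fin_cases i
    · show C (1715/22 : ℂ) * (chi * (X 1 * hh)) * pderiv 0 p ∈ P
      rw [key0 p]
      exact add_mem (add_mem (Ideal.mul_mem_left _ _ hdp) (Ideal.mul_mem_left _ _ hep))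
        (Ideal.mul_mem_left _ _ hfp)
    · show C (1715/22 : ℂ) * (chi * (X 1 * hh)) * pderiv 1 p ∈ P
      rw [key1 p]
      exact add_mem (add_mem (Ideal.mul_mem_left _ _ hdp) (Ideal.mul_mem_left _ _ hep))
        (Ideal.mul_mem_left _ _ hfp)
    · show C (1715/22 : ℂ) * (chi * (X 1 * hh)) * pderiv 2 p ∈ P
      rw [key2 p]
      exact add_mem (add_mem (Ideal.mul_mem_left _ _ hdp) (Ideal.mul_mem_left _ _ hep))
        (Ideal.mul_mem_left _ _ hfp)
  rcases hP.mem_or_mem hW with h1 | h23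
  · exact absurd (P.eq_top_of_isUnit_mem h1
      ((isUnit_iff_ne_zero.mpr (by norm_num : (1715/22 : ℂ) ≠ 0)).map (C : ℂ →+* R3)))
      hP.ne_top
  rcases hP.mem_or_mem h23 with hchi | hYh
  · exact hchi
  rcases hP.mem_or_mem hYh with hY | hH
  · exact y_case P hP hst hY
  · exact h_case P hP hst hH
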